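/- Let R be a commutative noetherian ring and S a left noetherian ring which is an R-algebra. Then every injective S-module E admits a family (E_i)_{i ∈ I} of S-submodules such that E is the internal direct sum of the E_i, and each E_i is an injective S-module containing an essential S-submodule that is R-elementary (i.e., each E_i is an injective hull of an R-elementary S-module). -/

import Mathlib

/-- Annihilator in `R` of an `S`-submodule, `R` acting through `algebraMap R S`. -/
def annRS (R : Type*) {S M : Type*} [CommRing R] [Ring S] [Algebra R S]
    [AddCommGroup M] [Module S M] (N : Submodule S M) : Ideal R where
  carrier := {r : R | ∀ x ∈ N, algebraMap R S r • x = 0}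
  zero_mem' := by intro x _; simp
  add_mem' := by
    intro a b ha hb x hx
    rw [map_add, add_smul, ha x hx, hb x hx, add_zero]
  smul_mem' := by
    intro c a ha x hx
    rw [smul_eq_mul, map_mul, mul_smul, ha x hx, smul_zero]

/-- An `R`-elementary object: nonzero, finitely generated, and the `R`-annihilator of
every nonzero subobject equals a fixed prime ideal `p` of `R`. -/
def IsRElem (R : Type*) {S M : Type*} [CommRing R] [Ring S] [Algebra R S]
    [AddCommGroup M] [Module S M] (L : Submodule S M) : Prop :=
  L ≠ ⊥ ∧ L.FG ∧ ∃ p : Ideal R, p.IsPrime ∧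
    ∀ L' : Submodule S M, L' ≤ L → L' ≠ ⊥ → annRS R L' = p

universe v

section Aux

variable {R S E : Type*} [CommRing R] [Ring S] [Algebra R S] [AddCommGroup E] [Module S E]

theorem mem_annRS {r : R} {N : Submodule S E} :
    r ∈ annRS R N ↔ ∀ x ∈ N, algebraMap R S r • x = 0 := Iff.rfl

theorem annRS_anti {N N' : Submodule S E} (h : N ≤ N') : annRS R N' ≤ annRS R N :=
  fun _ hr => mem_annRS.2 fun x hx => mem_annRS.1 hr x (h hx)

/-- Multiplication by a central element, as an `S`-linear map. -/
def centralSmul (R : Type*) {S E : Type*} [CommRing R] [Ring S] [Algebra R S]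
    [AddCommGroup E] [Module S E] (b : R) : E →ₗ[S] E where
  toFun x := algebraMap R S b • x
  map_add' x y := smul_add _ x y
  map_smul' s x := by
    simp only [RingHom.id_apply, smul_smul, Algebra.commutes]

/-- Every nonzero submodule contains an `R`-elementary submodule. -/
theorem exists_relem (R : Type*) {S E : Type*} [CommRing R] [IsNoetherianRing R] [Ring S]
    [Algebra R S] [AddCommGroup E] [Module S E]
    (N : Submodule S E) (hN : N ≠ ⊥) :
    ∃ L : Submodule S E, L ≤ N ∧ IsRElem R L := by
  classical
  -- choose a submodule with maximal annihilator
  have hmaxex : ∃ p ∈ (fun L => annRS R L) '' {L : Submodule S E | L ≤ N ∧ L ≠ ⊥},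
      ∀ q ∈ (fun L => annRS R L) '' {L : Submodule S E | L ≤ N ∧ L ≠ ⊥}, p ≤ q → q = p := by
    have := (set_has_maximal_iff_noetherian (M := R) (R := R)).2 inferInstance
    obtain ⟨p, hp, hmax⟩ := this ((fun L => annRS R L) '' {L : Submodule S E | L ≤ N ∧ L ≠ ⊥})
      ⟨annRS R N, ⟨N, ⟨le_rfl, hN⟩, rfl⟩⟩
    exact ⟨p, hp, fun q hq hpq =>
      le_antisymm (by by_contra h; exact hmax q hq (lt_of_le_of_ne hpq (fun e => h (le_of_eq e.symm)))) hpq⟩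
  obtain ⟨p, ⟨L₀, ⟨hL₀N, hL₀⟩, rfl⟩, hmax⟩ := hmaxex
  have key : ∀ L' : Submodule S E, L' ≤ L₀ → L' ≠ ⊥ → annRS R L' = annRS R L₀ := by
    intro L' hle hne
    exact hmax _ ⟨L', ⟨hle.trans hL₀N, hne⟩, rfl⟩ (annRS_anti hle)
  have hprime : (annRS R L₀).IsPrime := by
    constructor
    · intro htop
      apply hL₀
      have h1 : (1 : R) ∈ annRS R L₀ := htop ▸ Submodule.mem_top
      rw [Submodule.eq_bot_iff]
      intro x hx
      have := mem_annRS.1 h1 x hx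
      rwa [map_one, one_smul] at this
    · intro a b hab
      by_cases hb : b ∈ annRS R L₀
      · exact Or.inr hb
      · left
        set Lb := L₀.map (centralSmul R (S := S) (E := E) b) with hLb
        have hLbL₀ : Lb ≤ L₀ := by
          rintro y ⟨x, hx, rfl⟩
          exact L₀.smul_mem _ hx
        have hLbne : Lb ≠ ⊥ := by
          rw [mem_annRS] at hb
          push_neg at hb
          obtain ⟨x, hx, hbx⟩ := hb
          exact Submodule.ne_bot_iff _ |>.2 ⟨algebraMap R S b • x, ⟨x, hx, rfl⟩, hbx⟩
        have ha : a ∈ annRS R Lb := by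
          rw [mem_annRS]
          rintro y ⟨x, hx, rfl⟩
          show algebraMap R S a • algebraMap R S b • x = 0
          rw [smul_smul, ← map_mul]
          exact mem_annRS.1 hab x hx
        rwa [key Lb hLbL₀ hLbne] at ha
  obtain ⟨x₀, hx₀, hx₀0⟩ := (Submodule.ne_bot_iff _).1 hL₀
  refine ⟨Submodule.span S {x₀}, ?_, ?_, Submodule.fg_span_singleton x₀, annRS R L₀, hprime, ?_⟩
  · exact (Submodule.span_le.2 (Set.singleton_subset_iff.2 hx₀)).trans hL₀N
  · intro h
    exact hx₀0 (Submodule.span_singleton_eq_bot.1 h)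
  · intro L' h1 h2
    exact key L' (h1.trans (Submodule.span_le.2 (Set.singleton_subset_iff.2 hx₀))) h2

/-- A retract (in an ambient injective module) is injective. -/
theorem injective_of_retract {S : Type*} [Ring S] {M : Type*} [AddCommGroup M] [Module S M]
    (hM : Module.Injective S M) (N : Submodule S M) (r : M →ₗ[S] N)
    (hr : ∀ x : N, r ↑x = x) : Module.Injective S ↥N where
  out X Y _ _ _ _ i hi f := by
    obtain ⟨g, hg⟩ := hM.out i hi (N.subtype ∘ₗ f)
    refine ⟨r ∘ₗ g, fun x => ?_⟩
    have : g (i x) = ↑(f x) := hg x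
    simp only [LinearMap.comp_apply, this]
    exact hr (f x)

/-- Injectivity transfers along linear equivalences. -/
theorem injective_of_linearEquiv {S : Type*} [Ring S] {M N : Type v} [AddCommGroup M]
    [AddCommGroup N] [Module S M] [Module S N] (e : M ≃ₗ[S] N)
    (hM : Module.Injective S M) : Module.Injective S N where
  out X Y _ _ _ _ i hi f := by
    obtain ⟨g, hg⟩ := hM.out i hi (e.symm.toLinearMap ∘ₗ f)
    refine ⟨e.toLinearMap ∘ₗ g, fun x => ?_⟩
    simp only [LinearMap.comp_apply, hg x, LinearEquiv.coe_coe, LinearEquiv.apply_symm_apply]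

theorem injective_bot (hE : Module.Injective S E) :
    Module.Injective S ↥(⊥ : Submodule S E) := by
  refine injective_of_retract hE ⊥ (0 : E →ₗ[S] ↥(⊥ : Submodule S E)) (fun x => ?_)
  have hx : (x : E) = 0 := x.2
  apply Subtype.ext
  simp [hx]

/-- The sup of two disjoint injective submodules is injective. -/
theorem injective_sup {A B : Submodule S E} (hA : Module.Injective S ↥A)
    (hB : Module.Injective S ↥B) (hd : Disjoint A B) :
    Module.Injective S ↥(A ⊔ B) := by
  have hAT : A ≤ A ⊔ B := le_sup_left
  have hBT : B ≤ A ⊔ B := le_sup_right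
  set A' := A.comap (A ⊔ B).subtype with hA'
  set B' := B.comap (A ⊔ B).subtype with hB'
  have hcompl : IsCompl A' B' := by
    constructor
    · rw [disjoint_iff, Submodule.eq_bot_iff]
      rintro x ⟨hxA, hxB⟩
      exact Subtype.ext (Submodule.disjoint_def.1 hd _ hxA hxB)
    · rw [codisjoint_iff, eq_top_iff]
      rintro ⟨x, hx⟩ -
      rcases Submodule.mem_sup.1 hx with ⟨a, ha, b, hb, rfl⟩
      refine Submodule.mem_sup.2 ⟨⟨a, hAT ha⟩, ?_, ⟨b, hBT hb⟩, ?_, rfl⟩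
      · exact ha
      · exact hb
  set e := Submodule.prodEquivOfIsCompl A' B' hcompl with he
  set eA := Submodule.comapSubtypeEquivOfLe hAT with heA
  set eB := Submodule.comapSubtypeEquivOfLe hBT with heB
  constructor
  intro X Y _ _ _ _ i hi f
  obtain ⟨gA, hgA⟩ := hA.out i hi
    (eA.toLinearMap ∘ₗ (LinearMap.fst S A' B') ∘ₗ e.symm.toLinearMap ∘ₗ f)
  obtain ⟨gB, hgB⟩ := hB.out i hi
    (eB.toLinearMap ∘ₗ (LinearMap.snd S A' B') ∘ₗ e.symm.toLinearMap ∘ₗ f)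
  refine ⟨e.toLinearMap ∘ₗ ((eA.symm.toLinearMap ∘ₗ gA).prod (eB.symm.toLinearMap ∘ₗ gB)),
    fun x => ?_⟩
  have h1 : (eA.symm (gA (i x)), eB.symm (gB (i x))) = e.symm (f x) := by
    have h2 := hgA x
    have h3 := hgB x
    simp only [LinearMap.comp_apply, LinearEquiv.coe_coe] at h2 h3
    rw [h2, h3]
    simp only [LinearEquiv.symm_apply_apply, LinearMap.fst_apply, LinearMap.snd_apply, Prod.mk.eta]
  simp only [LinearMap.comp_apply, LinearMap.prod_apply, Function.prod, LinearEquiv.coe_coe]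
  rw [h1, LinearEquiv.apply_symm_apply]

/-- The sup of a finite independent family of injective submodules is injective. -/
theorem injective_finsup (hE : Module.Injective S E) (𝒜 : Set (Submodule S E))
    (hind : ∀ a ∈ 𝒜, Disjoint a (sSup (𝒜 \ {a})))
    (hinj : ∀ a ∈ 𝒜, Module.Injective S ↥a)
    (t : Finset (Submodule S E)) (ht : ↑t ⊆ 𝒜) : Module.Injective S ↥(t.sup id) := by
  classical
  induction t using Finset.induction_on with
  | empty =>
    rw [Finset.sup_empty]
    exact injective_bot hE
  | @insert a t ha ih =>
    rw [Finset.sup_insert]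
    have hta : ↑t ⊆ 𝒜 := fun b hb => ht (Finset.mem_coe.2 (Finset.mem_insert_of_mem hb))
    have ha𝒜 : a ∈ 𝒜 := ht (Finset.mem_coe.2 (Finset.mem_insert_self a t))
    have hdisj : Disjoint (id a) (t.sup id) := by
      refine (hind a ha𝒜).mono_right (Finset.sup_le fun b hb => ?_)
      refine le_sSup ⟨hta hb, fun hba => ha ?_⟩
      have hba' : b = a := Set.mem_singleton_iff.1 hba
      rwa [hba'] at hb
    exact injective_sup (hinj a ha𝒜) (ih hta) hdisj

/-- An element of an arbitrary `sSup` lies in a finite sub-sup. -/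
theorem mem_sSup_finset (𝒜 : Set (Submodule S E)) {x : E} (hx : x ∈ sSup 𝒜) :
    ∃ t : Finset (Submodule S E), ↑t ⊆ 𝒜 ∧ x ∈ t.sup id := by
  classical
  rw [sSup_eq_iSup'] at hx
  obtain ⟨s, hs⟩ := Submodule.mem_iSup_iff_exists_finset.1 hx
  refine ⟨s.image Subtype.val, ?_, ?_⟩
  · intro b hb
    obtain ⟨i, _, rfl⟩ := Finset.mem_image.1 (Finset.mem_coe.1 hb)
    exact i.2
  · refine (iSup₂_le fun i hi => ?_ : (⨆ i ∈ s, (i : Submodule S E)) ≤ (s.image Subtype.val).sup id) hs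
    exact Finset.le_sup (f := id) (Finset.mem_image.2 ⟨i, hi, rfl⟩)

theorem subset_sSup_finset (𝒜 : Set (Submodule S E)) (s : Finset E)
    (hs : ∀ z ∈ s, z ∈ sSup 𝒜) :
    ∃ t : Finset (Submodule S E), ↑t ⊆ 𝒜 ∧ ∀ z ∈ s, z ∈ t.sup id := by
  classical
  induction s using Finset.induction_on with
  | empty => exact ⟨∅, by simp, by simp⟩
  | @insert a s ha ih =>
    obtain ⟨t1, ht1, h1⟩ := ih fun z hz => hs z (Finset.mem_insert_of_mem hz)
    obtain ⟨t2, ht2, h2⟩ := mem_sSup_finset 𝒜 (hs a (Finset.mem_insert_self a s))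
    refine ⟨t1 ∪ t2, ?_, ?_⟩
    · intro b hb
      rcases Finset.mem_union.1 (Finset.mem_coe.1 hb) with h | h
      · exact ht1 h
      · exact ht2 h
    · intro z hz
      rcases Finset.mem_insert.1 hz with rfl | hz
      · have hle : t2.sup id ≤ (t1 ∪ t2).sup id := Finset.sup_mono Finset.subset_union_right
        exact hle h2
      · have hle : t1.sup id ≤ (t1 ∪ t2).sup id := Finset.sup_mono Finset.subset_union_left
        exact hle (h1 z hz)

/-- Over a left noetherian ring, the `sSup` of an independent family of injective submodules
of an injective module is a retract (Bass–Papp style argument via partial linear maps). -/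
theorem exists_retraction_sSup [IsNoetherianRing S] (hE : Module.Injective S E)
    (𝒜 : Set (Submodule S E)) (hind : ∀ a ∈ 𝒜, Disjoint a (sSup (𝒜 \ {a})))
    (hinj : ∀ a ∈ 𝒜, Module.Injective S ↥a) :
    ∃ r : E →ₗ[S] ↥(sSup 𝒜), ∀ x : ↥(sSup 𝒜), r ↑x = x := by
  classical
  set F := sSup 𝒜 with hF
  set cand : Set (E →ₗ.[S] ↥F) :=
    {h | F ≤ h.domain ∧ ∀ (x : E) (hx : x ∈ h.domain), x ∈ F → ↑(h ⟨x, hx⟩) = x} with hcand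
  have hbase : (⟨F, LinearMap.id⟩ : E →ₗ.[S] ↥F) ∈ cand :=
    ⟨le_rfl, fun x hx _ => rfl⟩
  have hchain : ∀ c ⊆ cand, IsChain (· ≤ ·) c → ∀ y ∈ c, ∃ ub ∈ cand, ∀ z ∈ c, z ≤ ub := by
    intro c hc hch y hy
    have hdir : DirectedOn (· ≤ ·) c := hch.directedOn
    refine ⟨LinearPMap.sSup c hdir, ⟨?_, ?_⟩, fun z hz => LinearPMap.le_sSup hdir hz⟩
    · exact le_trans (hc hy).1 (LinearPMap.le_sSup hdir hy).1
    · intro x hx hxF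
      have hxy : x ∈ y.domain := (hc hy).1 hxF
      have h2 := (LinearPMap.le_sSup hdir hy).2 (x := ⟨x, hxy⟩) (y := ⟨x, hx⟩) rfl
      rw [← h2]
      exact (hc hy).2 x hxy hxF
  obtain ⟨m, -, hmmax⟩ := zorn_le_nonempty₀ cand hchain _ hbase
  have hmcand := hmmax.prop
  by_cases hdom : m.domain = ⊤
  · refine ⟨{ toFun := fun x => m ⟨x, by rw [hdom]; trivial⟩
              map_add' := fun x y => by rw [← LinearPMap.map_add]; congr
              map_smul' := fun s x => by rw [← LinearPMap.map_smul]; dsimp }, fun x => ?_⟩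
    exact Subtype.ext (hmcand.2 ↑x _ x.2)
  · exfalso
    obtain ⟨y, -, hy⟩ := SetLike.exists_of_lt (lt_top_iff_ne_top.2 hdom : m.domain < ⊤)
    set D := m.domain with hD
    set Sy := Submodule.span S ({y} : Set E) with hSy
    set W := D ⊓ Sy with hW
    have hSyfg : Sy.FG := Submodule.fg_span_singleton y
    have hSyNoeth : IsNoetherian S Sy := isNoetherian_of_fg_of_noetherian _ hSyfg
    have hWfg : W.FG := by
      have h1 : (W.comap Sy.subtype).FG := IsNoetherian.noetherian _
      have h2 := h1.map Sy.subtype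
      rwa [Submodule.map_comap_subtype, inf_eq_right.2 (inf_le_right : W ≤ Sy)] at h2
    have hWNoeth : IsNoetherian S ↥W := isNoetherian_of_fg_of_noetherian _ hWfg
    set ι1 : ↥W →ₗ[S] ↥D := Submodule.inclusion inf_le_left with hι1
    set φE : ↥W →ₗ[S] E := F.subtype ∘ₗ m.toFun ∘ₗ ι1 with hφE
    set V := LinearMap.range φE with hV
    have hVfg : V.FG := by
      have h1 := (IsNoetherian.noetherian (⊤ : Submodule S ↥W)).map φE
      rwa [Submodule.map_top] at h1
    have hVF : V ≤ F := by
      rintro v ⟨w, rfl⟩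
      exact (m.toFun (ι1 w)).2
    obtain ⟨sV, hsV⟩ := hVfg
    obtain ⟨t, ht𝒜, htV⟩ := subset_sSup_finset 𝒜 sV (fun z hz => by
      apply hVF
      rw [← hsV]
      exact Submodule.subset_span hz)
    set F₀ := t.sup id with hF₀
    have hF₀F : F₀ ≤ F := Finset.sup_le fun b hb => le_sSup (ht𝒜 hb)
    have hVF₀ : V ≤ F₀ := by
      rw [← hsV]
      exact Submodule.span_le.2 fun z hz => htV z hz
    have hF₀inj : Module.Injective S ↥F₀ := injective_finsup hE 𝒜 hind hinj t ht𝒜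
    set φ0 : ↥W →ₗ[S] ↥F₀ := LinearMap.codRestrict F₀ φE (fun w => hVF₀ ⟨w, rfl⟩) with hφ0
    set ι2 : ↥W →ₗ[S] ↥Sy := Submodule.inclusion inf_le_right with hι2
    obtain ⟨ψ0, hψ0⟩ := hF₀inj.out ι2 (Submodule.inclusion_injective _) φ0
    set ψ : ↥Sy →ₗ[S] ↥F := (Submodule.inclusion hF₀F) ∘ₗ ψ0 with hψ
    set g : E →ₗ.[S] ↥F := ⟨Sy, ψ⟩ with hg
    have hcompat : ∀ (xd : ↥D) (ys : ↥(g.domain)), (xd : E) = ys → m xd = g ys := by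
      intro xd ys hxy
      set w : ↥W := ⟨↑xd, ⟨xd.2, by rw [hxy]; exact ys.2⟩⟩ with hw
      have h2 : ι2 w = ys := Subtype.ext hxy
      have h1 : ι1 w = xd := Subtype.ext rfl
      apply Subtype.ext
      show ((m xd : ↥F) : E) = ((ψ ys : ↥F) : E)
      rw [← h2, ← h1]
      have h3 : ψ (ι2 w) = Submodule.inclusion hF₀F (ψ0 (ι2 w)) := rfl
      rw [h3, hψ0 w]
      rfl
    set m' := m.sup g hcompat with hm'
    have hm'cand : m' ∈ cand := by
      constructor
      · exact le_trans hmcand.1 (m.left_le_sup g hcompat).1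
      · intro x hx hxF
        have hxd : x ∈ m.domain := hmcand.1 hxF
        have h2 := (m.left_le_sup g hcompat).2 (x := ⟨x, hxd⟩) (y := ⟨x, hx⟩) rfl
        rw [← h2]
        exact hmcand.2 x hxd hxF
    have hle : m ≤ m' := m.left_le_sup g hcompat
    have hm'le := hmmax.2 hm'cand hle
    apply hy
    apply hm'le.1
    show y ∈ m'.domain
    rw [hm', LinearPMap.domain_sup]
    have hylem : y ∈ g.domain := Submodule.mem_span_singleton_self y
    exact (le_sup_right : g.domain ≤ m.domain ⊔ g.domain) hylem

/-- Inside an injective module, every nonzero submodule has an "injective hull":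
a submodule containing it essentially, which is itself injective. -/
theorem exists_injective_hull {S : Type*} [Ring S] {M : Type v} [AddCommGroup M] [Module S M]
    (hM : Module.Injective S M) (L : Submodule S M) (hL : L ≠ ⊥) :
    ∃ E₀ : Submodule S M, L ≤ E₀ ∧ Module.Injective S ↥E₀ ∧
      ∀ N ≤ E₀, N ≠ ⊥ → L ⊓ N ≠ ⊥ := by
  classical
  -- Zorn 1: maximal essential extension of L
  set s1 : Set (Submodule S M) := {N | L ≤ N ∧ ∀ W ≤ N, W ≠ ⊥ → L ⊓ W ≠ ⊥} with hs1
  have hL1 : L ∈ s1 := ⟨le_rfl, fun W hW hWne => by rwa [inf_eq_right.2 hW]⟩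
  have hchain1 : ∀ c ⊆ s1, IsChain (· ≤ ·) c → ∀ y ∈ c, ∃ ub ∈ s1, ∀ z ∈ c, z ≤ ub := by
    intro c hc hch y hy
    have hdir := hch.directedOn
    have hne : c.Nonempty := ⟨y, hy⟩
    refine ⟨sSup c, ⟨le_trans (hc hy).1 (le_sSup hy), ?_⟩, fun z hz => le_sSup hz⟩
    intro W hW hWne
    obtain ⟨w, hwW, hw0⟩ := (Submodule.ne_bot_iff W).1 hWne
    obtain ⟨Ni, hNic, hwNi⟩ := (Submodule.mem_sSup_of_directed hne hdir).1 (hW hwW)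
    have hsp : Submodule.span S {w} ≤ Ni := Submodule.span_le.2 (Set.singleton_subset_iff.2 hwNi)
    have h1 := (hc hNic).2 _ hsp (fun h => hw0 (Submodule.span_singleton_eq_bot.1 h))
    intro hbot
    apply h1
    have h2 : L ⊓ Submodule.span S {w} ≤ L ⊓ W :=
      inf_le_inf_left L (Submodule.span_le.2 (Set.singleton_subset_iff.2 hwW))
    exact le_bot_iff.1 (hbot ▸ h2)
  obtain ⟨E₀, hLE₀, hE₀max⟩ := zorn_le_nonempty₀ s1 hchain1 L hL1
  have hE₀s1 := hE₀max.prop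
  -- E₀ has no proper essential extension
  have hnpe : ∀ N, E₀ ≤ N → (∀ W ≤ N, W ≠ ⊥ → E₀ ⊓ W ≠ ⊥) → N = E₀ := by
    intro N hEN hess
    have hNs1 : N ∈ s1 := by
      refine ⟨hE₀s1.1.trans hEN, fun W hW hWne => ?_⟩
      have h1 := hess W hW hWne
      have h2 := hE₀s1.2 (E₀ ⊓ W) inf_le_left h1
      intro hbot
      apply h2
      have h3 : L ⊓ (E₀ ⊓ W) ≤ L ⊓ W := inf_le_inf_left L inf_le_right
      exact le_bot_iff.1 (hbot ▸ h3)
    exact le_antisymm (hE₀max.2 hNs1 hEN) hEN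
  -- Zorn 2: maximal complement of E₀
  set s2 : Set (Submodule S M) := {C | Disjoint C E₀} with hs2
  have hbot2 : (⊥ : Submodule S M) ∈ s2 := disjoint_bot_left
  have hchain2 : ∀ c ⊆ s2, IsChain (· ≤ ·) c → ∀ y ∈ c, ∃ ub ∈ s2, ∀ z ∈ c, z ≤ ub := by
    intro c hc hch y hy
    have hdir := hch.directedOn
    have hne : c.Nonempty := ⟨y, hy⟩
    refine ⟨sSup c, ?_, fun z hz => le_sSup hz⟩
    rw [Set.mem_setOf_eq, Submodule.disjoint_def]
    intro x hxs hxE₀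
    obtain ⟨Ni, hNic, hxNi⟩ := (Submodule.mem_sSup_of_directed hne hdir).1 hxs
    exact Submodule.disjoint_def.1 (hc hNic) x hxNi hxE₀
  obtain ⟨C, -, hCmax⟩ := zorn_le_nonempty₀ s2 hchain2 ⊥ hbot2
  have hCE₀ : Disjoint C E₀ := hCmax.prop
  -- the quotient by C
  set q := C.mkQ with hq
  set Eb := E₀.map q with hEb
  set f2 : ↥E₀ →ₗ[S] ↥Eb :=
    LinearMap.codRestrict Eb (q ∘ₗ E₀.subtype) (fun c => Submodule.mem_map_of_mem c.2) with hf2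
  have hf2inj : Function.Injective f2 := by
    intro x z hxz
    have h1 : q ↑x = q ↑z := congrArg Subtype.val hxz
    rw [Submodule.mkQ_apply, Submodule.mkQ_apply, Submodule.Quotient.eq] at h1
    have h2 : (↑x - ↑z : M) ∈ E₀ := sub_mem x.2 z.2
    have h3 : (↑x - ↑z : M) = 0 := Submodule.disjoint_def.1 hCE₀ _ h1 h2
    exact Subtype.ext (sub_eq_zero.1 h3)
  have hf2surj : Function.Surjective f2 := by
    rintro ⟨z, hz⟩
    obtain ⟨x, hx, rfl⟩ := Submodule.mem_map.1 hz
    exact ⟨⟨x, hx⟩, Subtype.ext rfl⟩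
  set e := LinearEquiv.ofBijective f2 ⟨hf2inj, hf2surj⟩ with he
  set φ : ↥Eb →ₗ[S] M := E₀.subtype ∘ₗ e.symm.toLinearMap with hφ
  obtain ⟨h, hh⟩ := hM.out Eb.subtype (Submodule.injective_subtype Eb) φ
  -- Eb is essential in M ⧸ C
  have hEbess : ∀ Wq : Submodule S (M ⧸ C), Wq ≠ ⊥ → Eb ⊓ Wq ≠ ⊥ := by
    intro Wq hWq
    obtain ⟨z, hzW, hz0⟩ := (Submodule.ne_bot_iff Wq).1 hWq
    obtain ⟨x, rfl⟩ := Submodule.mkQ_surjective C z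
    have hxC : x ∉ C := fun hmem => hz0 (by
      rw [Submodule.mkQ_apply, Submodule.Quotient.mk_eq_zero]
      exact hmem)
    set W' := Wq.comap q with hW'
    have hCW' : C ≤ W' := by
      intro u hu
      show q u ∈ Wq
      have : q u = 0 := by rw [Submodule.mkQ_apply, Submodule.Quotient.mk_eq_zero]; exact hu
      rw [this]; exact Wq.zero_mem
    have hW'nd : ¬ Disjoint W' E₀ := by
      intro hdisj
      have hle := hCmax.2 hdisj hCW'
      exact hxC (hle (show x ∈ W' from hzW))
    rw [Submodule.disjoint_def] at hW'nd
    push_neg at hW'nd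
    obtain ⟨u, huW', huE₀, hu0⟩ := hW'nd
    refine (Submodule.ne_bot_iff _).2 ⟨q u, ⟨Submodule.mem_map_of_mem huE₀, huW'⟩, ?_⟩
    intro h0
    apply hu0
    rw [Submodule.mkQ_apply, Submodule.Quotient.mk_eq_zero] at h0
    exact Submodule.disjoint_def.1 hCE₀ u h0 huE₀
  -- h is injective
  have hφE₀ : ∀ z : ↥Eb, φ z ∈ E₀ := fun z => (e.symm z).2
  have hhinj : Function.Injective h := by
    rw [← LinearMap.ker_eq_bot]
    by_contra hker
    obtain ⟨z, ⟨hzEb, hzker⟩, hz0⟩ := (Submodule.ne_bot_iff _).1 (hEbess _ hker)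
    have h1 : h z = φ ⟨z, hzEb⟩ := hh ⟨z, hzEb⟩
    have h2 : h z = 0 := hzker
    have h3 : e.symm ⟨z, hzEb⟩ = 0 := by
      apply Subtype.ext
      have := h1.symm.trans h2
      simpa [hφ] using this
    have h4 : (⟨z, hzEb⟩ : ↥Eb) = 0 := by
      have := congrArg e h3
      rwa [LinearEquiv.apply_symm_apply, map_zero] at this
    exact hz0 (congrArg Subtype.val h4)
  -- h ∘ q restricts to the identity on E₀
  have hkey : ∀ x ∈ E₀, h (q x) = x := by
    intro x hx
    have h1 : (⟨q x, Submodule.mem_map_of_mem hx⟩ : ↥Eb) = f2 ⟨x, hx⟩ := Subtype.ext rfl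
    have h2 : h (q x) = φ ⟨q x, Submodule.mem_map_of_mem hx⟩ :=
      hh ⟨q x, Submodule.mem_map_of_mem hx⟩
    rw [h2, h1]
    show ↑(e.symm (f2 ⟨x, hx⟩)) = x
    have h3 : e.symm (f2 ⟨x, hx⟩) = ⟨x, hx⟩ := by
      have : e ⟨x, hx⟩ = f2 ⟨x, hx⟩ := rfl
      rw [← this, LinearEquiv.symm_apply_apply]
    rw [h3]
  -- range h = E₀
  have hE₀Rng : E₀ ≤ LinearMap.range h := fun x hx => ⟨q x, hkey x hx⟩
  have hessRng : ∀ W ≤ LinearMap.range h, W ≠ ⊥ → E₀ ⊓ W ≠ ⊥ := by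
    intro W hWR hWne
    obtain ⟨w, hwW, hw0⟩ := (Submodule.ne_bot_iff W).1 hWne
    obtain ⟨z, rfl⟩ := hWR hwW
    have hz0 : z ≠ 0 := fun h0 => hw0 (by rw [h0, map_zero])
    have hW'ne : W.comap h ≠ ⊥ := (Submodule.ne_bot_iff _).2 ⟨z, hwW, hz0⟩
    obtain ⟨u, ⟨huEb, huW'⟩, hu0⟩ := (Submodule.ne_bot_iff _).1 (hEbess _ hW'ne)
    refine (Submodule.ne_bot_iff _).2 ⟨h u, ⟨?_, huW'⟩, ?_⟩
    · have h1 : h u = φ ⟨u, huEb⟩ := hh ⟨u, huEb⟩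
      rw [h1]
      exact hφE₀ _
    · intro h0
      exact hu0 (hhinj (by rw [h0, map_zero]))
  have hRngE₀ : LinearMap.range h = E₀ := hnpe _ hE₀Rng hessRng
  -- build the retraction
  set ρ := h ∘ₗ q with hρ
  have hρmem : ∀ x : M, ρ x ∈ E₀ := fun x => hRngE₀ ▸ LinearMap.mem_range_self h (q x)
  set r : M →ₗ[S] ↥E₀ := LinearMap.codRestrict E₀ ρ hρmem with hr
  have hrid : ∀ x : ↥E₀, r ↑x = x := fun x => Subtype.ext (hkey ↑x x.2)
  exact ⟨E₀, hLE₀, injective_of_retract hM E₀ r hrid, hE₀s1.2⟩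

end Aux

/-- Helper: a finite set inside a chain union is inside one chain member. -/
theorem chain_finset_subset {α : Type*} {c : Set (Set α)} (hch : IsChain (· ⊆ ·) c)
    {B₀ : Set α} (hB₀ : B₀ ∈ c) (t : Finset α) (ht : ∀ b ∈ t, b ∈ ⋃₀ c) :
    ∃ B ∈ c, B₀ ⊆ B ∧ ∀ b ∈ t, b ∈ B := by
  classical
  induction t using Finset.induction_on with
  | empty => exact ⟨B₀, hB₀, subset_rfl, by simp⟩
  | @insert u t hu ih =>
    obtain ⟨B, hBc, hB₀B, htB⟩ := ih fun b hb => ht b (Finset.mem_insert_of_mem hb)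
    obtain ⟨Bu, hBuc, huBu⟩ := Set.mem_sUnion.1 (ht u (Finset.mem_insert_self u t))
    rcases hch.total hBc hBuc with hle | hle
    · refine ⟨Bu, hBuc, hB₀B.trans hle, fun b hb => ?_⟩
      rcases Finset.mem_insert.1 hb with rfl | hb
      · exact huBu
      · exact hle (htB b hb)
    · refine ⟨B, hBc, hB₀B, fun b hb => ?_⟩
      rcases Finset.mem_insert.1 hb with rfl | hb
      · exact hle huBu
      · exact htB b hb

/-- Every injective `S`-module `E` is an internal direct sum of a family of `S`-submodules,
each of which is an injective `S`-module that is an injective hull of an `R`-elementary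
object (it contains an essential `R`-elementary `S`-submodule). -/
theorem injective_is_direct_sum_of_injective_hulls_of_elementary
    (R S E : Type*) [CommRing R] [IsNoetherianRing R] [Ring S] [IsNoetherianRing S]
    [Algebra R S] [AddCommGroup E] [Module S E] (hE : Module.Injective S E) :
    ∃ 𝒜 : Set (Submodule S E),
      sSup 𝒜 = ⊤ ∧
      (∀ E' ∈ 𝒜, Disjoint E' (sSup (𝒜 \ {E'}))) ∧
      ∀ E' ∈ 𝒜, Module.Injective S ↥E' ∧
        ∃ L : Submodule S E, L ≤ E' ∧ IsRElem R L ∧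
          ∀ N' : Submodule S E, N' ≤ E' → N' ≠ ⊥ → L ⊓ N' ≠ ⊥ := by
  classical
  set P : Submodule S E → Prop := fun E' =>
    Module.Injective S ↥E' ∧ ∃ L : Submodule S E, L ≤ E' ∧ IsRElem R L ∧
      ∀ N' : Submodule S E, N' ≤ E' → N' ≠ ⊥ → L ⊓ N' ≠ ⊥ with hP
  set 𝒮 : Set (Set (Submodule S E)) :=
    {𝒜 | (∀ a ∈ 𝒜, Disjoint a (sSup (𝒜 \ {a}))) ∧ ∀ a ∈ 𝒜, P a} with h𝒮
  have hempty : (∅ : Set (Submodule S E)) ∈ 𝒮 := ⟨by simp, by simp⟩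
  have hchain : ∀ c ⊆ 𝒮, IsChain (· ≤ ·) c → ∀ y ∈ c, ∃ ub ∈ 𝒮, ∀ z ∈ c, z ≤ ub := by
    intro c hc hch y hy
    refine ⟨⋃₀ c, ⟨?_, ?_⟩, fun z hz => Set.subset_sUnion_of_mem hz⟩
    · intro a ha
      rw [Submodule.disjoint_def]
      intro x hxa hxs
      obtain ⟨t, htsub, hxt⟩ := mem_sSup_finset _ hxs
      obtain ⟨B₀, hB₀c, haB₀⟩ := Set.mem_sUnion.1 ha
      obtain ⟨B, hBc, hB₀B, htB⟩ := chain_finset_subset hch hB₀c t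
        (fun b hb => (htsub hb).1)
      have hBind := (hc hBc).1 a (hB₀B haB₀)
      have hle : t.sup id ≤ sSup (B \ {a}) :=
        Finset.sup_le fun b hb => le_sSup ⟨htB b hb, (htsub hb).2⟩
      exact Submodule.disjoint_def.1 hBind x hxa (hle hxt)
    · rintro a ⟨B, hBc, haB⟩
      exact (hc hBc).2 a haB
  obtain ⟨𝒜, -, h𝒜max⟩ := zorn_le_nonempty₀ 𝒮 hchain ∅ hempty
  have h𝒜 := h𝒜max.prop
  by_cases hFtop : sSup 𝒜 = ⊤
  · exact ⟨𝒜, hFtop, h𝒜.1, fun E' hE' => h𝒜.2 E' hE'⟩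
  · exfalso
    set F := sSup 𝒜 with hF
    obtain ⟨r, hr⟩ := exists_retraction_sSup hE 𝒜 h𝒜.1 (fun a ha => (h𝒜.2 a ha).1)
    set ρ : E →ₗ[S] E := F.subtype ∘ₗ r with hρ
    have hρF : ∀ x : E, ρ x ∈ F := fun x => (r x).2
    have hρid : ∀ x ∈ F, ρ x = x := fun x hx => congrArg Subtype.val (hr ⟨x, hx⟩)
    set C := LinearMap.ker ρ with hC
    have hρker : ∀ x : E, x - ρ x ∈ C := by
      intro x
      show ρ (x - ρ x) = 0
      rw [map_sub, hρid (ρ x) (hρF x), sub_self]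
    have hCF : Disjoint C F := by
      rw [Submodule.disjoint_def]
      intro x hxC hxF
      rw [← hρid x hxF]
      exact hxC
    have hCne : C ≠ ⊥ := by
      intro hCbot
      apply hFtop
      rw [Submodule.eq_top_iff']
      intro x
      have hx := hρker x
      rw [hCbot, Submodule.mem_bot, sub_eq_zero] at hx
      rw [hx]
      exact hρF x
    have hCinj : Module.Injective S ↥C := by
      refine injective_of_retract hE C (LinearMap.codRestrict C (LinearMap.id - ρ) ?_) ?_
      · intro x
        exact hρker x
      · intro x
        apply Subtype.ext
        show ↑x - ρ ↑x = (x : E)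
        have hx0 : ρ ↑x = 0 := x.2
        rw [hx0, sub_zero]
    obtain ⟨L, hLC, hLelem⟩ := exists_relem R C hCne
    have hLne : L ≠ ⊥ := hLelem.1
    set L' : Submodule S ↥C := L.comap C.subtype with hL'def
    have hL' : L'.map C.subtype = L := by
      rw [Submodule.map_comap_subtype, inf_eq_right.2 hLC]
    have hL'ne : L' ≠ ⊥ := fun hb => hLne (by rw [← hL', hb, Submodule.map_bot])
    obtain ⟨E₀', hLE₀', hE₀'inj, hE₀'ess⟩ := exists_injective_hull hCinj L' hL'ne
    set E₀ : Submodule S E := E₀'.map C.subtype with hE₀def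
    have hE₀C : E₀ ≤ C := by
      rintro x ⟨u, hu, rfl⟩
      exact u.2
    have hLE₀ : L ≤ E₀ := by
      rw [← hL']
      exact Submodule.map_mono hLE₀'
    have hE₀inj : Module.Injective S ↥E₀ :=
      injective_of_linearEquiv
        (Submodule.equivMapOfInjective C.subtype (Submodule.injective_subtype C) E₀') hE₀'inj
    have hE₀ess : ∀ N' : Submodule S E, N' ≤ E₀ → N' ≠ ⊥ → L ⊓ N' ≠ ⊥ := by
      intro N' hN' hN'ne
      set N'' := N'.comap C.subtype with hN''def
      have hN'C : N' ≤ C := hN'.trans hE₀C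
      have hN''map : N''.map C.subtype = N' := by
        rw [Submodule.map_comap_subtype, inf_eq_right.2 hN'C]
      have hN''E₀' : N'' ≤ E₀' := by
        intro u hu
        obtain ⟨v, hv, hvu⟩ := hN' hu
        have hveq : v = u := Subtype.ext hvu
        exact hveq ▸ hv
      have hN''ne : N'' ≠ ⊥ := fun hb => hN'ne (by rw [← hN''map, hb, Submodule.map_bot])
      obtain ⟨u, ⟨huL', huN''⟩, hu0⟩ :=
        (Submodule.ne_bot_iff _).1 (hE₀'ess N'' hN''E₀' hN''ne)
      refine (Submodule.ne_bot_iff _).2 ⟨↑u, ⟨huL', huN''⟩, ?_⟩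
      intro h0
      exact hu0 (Subtype.ext h0)
    have hE₀ne : E₀ ≠ ⊥ := fun hb => hLne (le_bot_iff.1 (hb ▸ hLE₀))
    have hE₀F : Disjoint E₀ F := hCF.mono_left hE₀C
    have hE₀not : E₀ ∉ 𝒜 := fun hmem => hE₀ne (hE₀F.eq_bot_of_le (le_sSup hmem))
    have h𝒜'S : insert E₀ 𝒜 ∈ 𝒮 := by
      constructor
      · intro a ha
        rcases Set.mem_insert_iff.1 ha with rfl | ha
        · refine hE₀F.mono_right (sSup_le_sSup ?_)
          intro b hb
          rcases Set.mem_insert_iff.1 hb.1 with rfl | hbmem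
          · exact absurd rfl hb.2
          · exact hbmem
        · have h1 : Disjoint a (sSup (𝒜 \ {a})) := h𝒜.1 a ha
          have h2 : Disjoint (a ⊔ sSup (𝒜 \ {a})) E₀ := by
            refine hE₀F.symm.mono_left ?_
            exact sup_le (le_sSup ha) (sSup_le_sSup Set.diff_subset)
          have h3 := h1.disjoint_sup_right_of_disjoint_sup_left h2
          refine h3.mono_right (sSup_le ?_)
          intro b hb
          rcases Set.mem_insert_iff.1 hb.1 with rfl | hbmem
          · exact le_sup_right
          · have hb' : b ∈ 𝒜 \ {a} := ⟨hbmem, hb.2⟩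
            exact le_trans (le_sSup hb' : b ≤ sSup (𝒜 \ {a})) le_sup_left
      · intro a ha
        rcases Set.mem_insert_iff.1 ha with rfl | ha
        · exact ⟨hE₀inj, L, hLE₀, hLelem, hE₀ess⟩
        · exact h𝒜.2 a ha
    have hsub := h𝒜max.2 h𝒜'S (Set.subset_insert E₀ 𝒜)
    exact hE₀not (hsub (Set.mem_insert E₀ 𝒜))
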